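/- Let p ≥ 1 and nᵢ, kᵢ positive integers with k₁/n₁ ≤ k₂/n₂ ≤ ... ≤ k_p/n_p ≤ 1/2. If F is a family of 'multi-part sets' (p-tuples (A₁,...,A_p) with Aᵢ a kᵢ-subset of [nᵢ]) such that any two members intersect in at least one coordinate (i.e., for any F, F' ∈ F there exists i with Fᵢ ∩ F'ᵢ ≠ ∅), then |F| ≤ (k_p/n_p) · Πᵢ C(nᵢ, kᵢ). -/

import Mathlib

open Finset

/-- modular shift invariance of cyclic difference -/
lemma mod_shift {m : ℕ} (hm : 0 < m) (x y a : ℕ) (hy : y < m) :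
    ((x + a) % m + m - (y + a) % m) % m = (x + m - y) % m := by
  set u := (x + a) % m with hu
  set v := (y + a) % m with hv
  have hvm : v < m := Nat.mod_lt _ hm
  have h1 : (u + m - v) + (v + y) = u + m + y := by omega
  have h2 : (x + m - y) + (v + y) = x + m + v := by omega
  have hux : u ≡ x + a [MOD m] := Nat.mod_modEq _ _
  have hvy : v ≡ y + a [MOD m] := Nat.mod_modEq _ _
  have h3 : u + m + y ≡ x + m + v [MOD m] := by
    calc u + m + y ≡ (x + a) + m + y [MOD m] := by
          exact Nat.ModEq.add_right _ (Nat.ModEq.add_right _ hux)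
      _ = x + m + (y + a) := by ring
      _ ≡ x + m + v [MOD m] := Nat.ModEq.add_left _ hvy.symm
  have h4 : (u + m - v) + (v + y) ≡ (x + m - y) + (v + y) [MOD m] := by
    rw [h1, h2]; exact h3
  have h5 : (u + m - v) ≡ (x + m - y) [MOD m] := Nat.ModEq.add_right_cancel' _ h4
  exact h5

/-- Katona's circle lemma: a set of points on Z_m pairwise at cyclic distance < K
(with 2K ≤ m) has at most K elements. -/
lemma katona {m K : ℕ} (hK : 0 < K) (hm : 2 * K ≤ m) (T : Finset (Fin m))
    (hT : ∀ t ∈ T, ∀ t' ∈ T,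
      ((t : ℕ) + m - (t' : ℕ)) % m < K ∨ ((t' : ℕ) + m - (t : ℕ)) % m < K) :
    T.card ≤ K := by
  rcases T.eq_empty_or_nonempty with h | ⟨t₀, ht₀⟩
  · simp [h]
  have hmpos : 0 < m := by omega
  set δ : Fin m → ℕ := fun t => ((t : ℕ) + m - (t₀ : ℕ)) % m with hδdef
  have hδlt : ∀ t, δ t < m := fun t => Nat.mod_lt _ hmpos
  -- sum of the two differences is 0 or m
  have hpair : ∀ t : Fin m, δ t + ((t₀ : ℕ) + m - (t : ℕ)) % m = 0 ∨
      δ t + ((t₀ : ℕ) + m - (t : ℕ)) % m = m := by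
    intro t
    have hδt := hδlt t
    set β := ((t₀ : ℕ) + m - (t : ℕ)) % m with hβ
    have hβm : β < m := Nat.mod_lt _ hmpos
    have hsum : (((t : ℕ) + m - t₀) + ((t₀ : ℕ) + m - t)) % m = 0 := by
      have : ((t : ℕ) + m - t₀) + ((t₀ : ℕ) + m - t) = 2 * m := by
        have := t.isLt; have := t₀.isLt; omega
      simp [this, Nat.mul_mod_right]
    have : (δ t + β) % m = 0 := by
      rw [hδdef, hβ, Nat.add_mod, Nat.mod_mod_of_dvd, Nat.mod_mod_of_dvd] <;>
        first
          | exact dvd_refl m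
          | (rw [← Nat.add_mod]; exact hsum)
    have hd : m ∣ δ t + β := Nat.dvd_of_mod_eq_zero this
    obtain ⟨c, hc⟩ := hd
    have : c ≤ 1 := by
      by_contra hc2
      push_neg at hc2
      have : 2 * m ≤ m * c := by
        calc 2 * m = m * 2 := by ring
          _ ≤ m * c := Nat.mul_le_mul_left _ hc2
      omega
    interval_cases c <;> omega
  -- every element is close to t₀
  have hrange : ∀ t ∈ T, δ t < K ∨ (m - K < δ t ∧ δ t < m) := by
    intro t ht
    have hδt := hδlt t
    rcases hT t ht t₀ ht₀ with h | h
    · left; exact h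
    · rcases hpair t with h0 | h0
      · left; omega
      · right; constructor <;> omega
  -- the injection
  set ψ : Fin m → ℕ := fun t => if δ t < K then δ t else δ t - (m - K) with hψdef
  have hmaps : ∀ t ∈ T, ψ t ∈ Finset.range K := by
    intro t ht
    simp only [hψdef, Finset.mem_range]
    split
    · assumption
    · have := hδlt t; omega
  -- closeness between two elements in terms of δ's
  have hclose : ∀ t ∈ T, ∀ t' ∈ T, δ t' ≤ δ t →
      (δ t - δ t' < K ∨ (δ t = δ t' ∨ m - (δ t - δ t') < K)) := by
    intro t ht t' ht' hle
    have h1 : ((t : ℕ) + m - (t' : ℕ)) % m = (δ t + m - δ t') % m := by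
      rw [hδdef]
      have ht0m : (t₀ : ℕ) ≤ m := le_of_lt t₀.isLt
      have e1 : (t : ℕ) + m - (t₀ : ℕ) = (t : ℕ) + (m - (t₀ : ℕ)) := by omega
      have e2 : (t' : ℕ) + m - (t₀ : ℕ) = (t' : ℕ) + (m - (t₀ : ℕ)) := by omega
      simp only [e1, e2]
      rw [mod_shift hmpos _ _ _ t'.isLt]
    have h2 : ((t' : ℕ) + m - (t : ℕ)) % m = (δ t' + m - δ t) % m := by
      rw [hδdef]
      have ht0m : (t₀ : ℕ) ≤ m := le_of_lt t₀.isLt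
      have e1 : (t : ℕ) + m - (t₀ : ℕ) = (t : ℕ) + (m - (t₀ : ℕ)) := by omega
      have e2 : (t' : ℕ) + m - (t₀ : ℕ) = (t' : ℕ) + (m - (t₀ : ℕ)) := by omega
      simp only [e1, e2]
      rw [mod_shift hmpos _ _ _ t.isLt]
    have hd1 : (δ t + m - δ t') % m = δ t - δ t' := by
      have : δ t + m - δ t' = (δ t - δ t') + m := by omega
      rw [this, Nat.add_mod_right, Nat.mod_eq_of_lt (by have := hδlt t; omega)]
    rcases eq_or_lt_of_le hle with heq | hlt
    · right; left; exact heq.symm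
    · have hd2 : (δ t' + m - δ t) % m = m - (δ t - δ t') := by
        have : δ t' + m - δ t = m - (δ t - δ t') := by have := hδlt t; omega
        rw [this, Nat.mod_eq_of_lt (by omega)]
      rcases hT t ht t' ht' with h | h
      · left; rw [h1, hd1] at h; exact h
      · right; right; rw [h2, hd2] at h; exact h
  have hinj : Set.InjOn ψ T := by
    have key : ∀ t ∈ T, ∀ t' ∈ T, δ t' ≤ δ t → ψ t = ψ t' → δ t = δ t' := by
      intro t ht t' ht' hle hψ
      have hδt := hδlt t
      have hδt' := hδlt t'
      rcases hrange t ht with h1 | h1 <;> rcases hrange t' ht' with h2 | h2 <;>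
        rcases hclose t ht t' ht' hle with hc | hc | hc <;>
          (simp only [hψdef] at hψ; split_ifs at hψ <;> omega)
    intro t ht t' ht' hψ
    simp only [Finset.mem_coe] at ht ht'
    have hδeq : δ t = δ t' := by
      rcases le_total (δ t') (δ t) with h | h
      · exact key t ht t' ht' h hψ
      · exact (key t' ht' t ht h hψ.symm).symm
    -- δ injective
    have ht0m : (t₀ : ℕ) ≤ m := le_of_lt t₀.isLt
    simp only [hδdef] at hδeq
    have e1 : (t : ℕ) + m - (t₀ : ℕ) = (t : ℕ) + (m - (t₀ : ℕ)) := by omega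
    have e2 : (t' : ℕ) + m - (t₀ : ℕ) = (t' : ℕ) + (m - (t₀ : ℕ)) := by omega
    rw [e1, e2] at hδeq
    have : (t : ℕ) ≡ (t' : ℕ) [MOD m] := Nat.ModEq.add_right_cancel' _ hδeq
    have : (t : ℕ) % m = (t' : ℕ) % m := this
    rw [Nat.mod_eq_of_lt t.isLt, Nat.mod_eq_of_lt t'.isLt] at this
    exact Fin.ext this
  calc T.card ≤ (Finset.range K).card := Finset.card_le_card_of_injOn ψ hmaps hinj
    _ = K := Finset.card_range K

open Finset

/-- key number-theoretic fact: diagonal points at far cyclic distance in the last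
coordinate are far in every coordinate. -/
lemma diag_far {m N k K : ℕ} (hm : 0 < m) (hk : 0 < k)
    (hkn : k * m ≤ K * N) {t' d : ℕ}
    (h2 : K ≤ d) (h3 : d + K ≤ m) :
    k ≤ (t' + d) * N / m - t' * N / m ∧ (t' + d) * N / m - t' * N / m ≤ N - k := by
  have hKpos : 0 < K := by
    rcases Nat.eq_zero_or_pos K with h | h
    · subst h; simp at hkn; omega
    · exact h
  have hA : k ≤ d * N / m := by
    rw [Nat.le_div_iff_mul_le hm]
    calc k * m ≤ K * N := hkn
      _ ≤ d * N := Nat.mul_le_mul_right _ h2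
  have hdN : d * N ≤ (N - k) * m := by
    calc d * N ≤ (m - K) * N := Nat.mul_le_mul_right _ (by omega)
      _ = m * N - K * N := by rw [Nat.sub_mul]
      _ ≤ m * N - k * m := Nat.sub_le_sub_left hkn _
      _ = (N - k) * m := by rw [Nat.sub_mul]; ring_nf
  have hC : (t' + d) * N = t' * N + d * N := by ring
  rw [hC, Nat.add_div hm]
  by_cases hdvd : d * N % m = 0
  · have hif : ¬ (m ≤ t' * N % m + d * N % m) := by
      have := Nat.mod_lt (t' * N) hm; omega
    rw [if_neg hif]
    have hB : d * N / m ≤ N - k := by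
      calc d * N / m ≤ (N - k) * m / m := Nat.div_le_div_right hdN
        _ = N - k := Nat.mul_div_cancel _ hm
    omega
  · have hlt : d * N < (N - k) * m := by
      rcases Nat.lt_or_ge (d * N) ((N - k) * m) with h | h
      · exact h
      · exfalso
        have : d * N = (N - k) * m := le_antisymm hdN h
        exact hdvd (by rw [this]; exact Nat.mul_mod_left _ _)
    have hB : d * N / m < N - k := Nat.div_lt_of_lt_mul (by calc d * N < (N - k) * m := hlt
        _ = m * (N - k) := mul_comm _ _)
    split <;> omega

/-- an arc of length `len` starting at `s` on the cycle `Fin N` -/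
def arc {N : ℕ} (hN : 0 < N) (s len : ℕ) : Finset (Fin N) :=
  (Finset.range len).image fun j => ⟨(s + j) % N, Nat.mod_lt _ hN⟩

lemma arc_card {N : ℕ} (hN : 0 < N) (s : ℕ) {len : ℕ} (hlen : len ≤ N) :
    (arc hN s len).card = len := by
  rw [arc, Finset.card_image_of_injOn, Finset.card_range]
  intro j hj j' hj' h
  simp only [Finset.coe_range, Set.mem_Iio] at hj hj'
  have h' : (s + j) % N = (s + j') % N := by
    simpa using congrArg Fin.val h
  have : j ≡ j' [MOD N] := Nat.ModEq.add_left_cancel' s h'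
  have : j % N = j' % N := this
  rw [Nat.mod_eq_of_lt (by omega), Nat.mod_eq_of_lt (by omega)] at this
  exact this

/-- if two arcs of the same length intersect, their starting points are cyclically close -/
lemma arc_inter_close {N : ℕ} (hN : 0 < N) {len s s' : ℕ} (hs : s < N) (hs' : s' < N)
    (hlen : len ≤ N)
    (h : ((arc hN s len) ∩ (arc hN s' len)).Nonempty) :
    (s + N - s') % N < len ∨ (s' + N - s) % N < len := by
  obtain ⟨x, hx⟩ := h
  rw [Finset.mem_inter, arc, arc] at hx
  obtain ⟨hx1, hx2⟩ := hx
  simp only [Finset.mem_image, Finset.mem_range] at hx1 hx2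
  obtain ⟨j, hj, hxj⟩ := hx1
  obtain ⟨j', hj', hxj'⟩ := hx2
  have hmod : (s + j) % N = (s' + j') % N := by
    have := hxj.trans hxj'.symm
    simpa using congrArg Fin.val this
  -- main claim, symmetric in the two arcs
  have main : ∀ a b u u' : ℕ, a < N → b < N → u < len → u' < len → u ≤ u' →
      (a + u) % N = (b + u') % N → (a + N - b) % N < len := by
    intro a b u u' ha hb hu hu' huu hmod
    have e1 : (a + N - b) + (b + u) = (a + u) + N := by omega
    have e2 : (u' - u) + (b + u) = b + u' := by omega
    have step : (a + N - b) + (b + u) ≡ (u' - u) + (b + u) [MOD N] := by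
      rw [e1, e2]
      calc (a + u) + N ≡ a + u [MOD N] := by
            unfold Nat.ModEq; rw [Nat.add_mod_right]
        _ ≡ b + u' [MOD N] := hmod
    have hcan : (a + N - b) ≡ (u' - u) [MOD N] := Nat.ModEq.add_right_cancel' _ step
    have : (a + N - b) % N = (u' - u) % N := hcan
    rw [this, Nat.mod_eq_of_lt (by omega)]
    omega
  rcases le_total j j' with hle | hle
  · left; exact main s s' j j' hs hs' hj hj' hle hmod
  · right; exact main s' s j' j hs' hs hj' hj hle hmod.symm

lemma exists_perm_image {α : Type*} [Fintype α] [DecidableEq α] {s t : Finset α}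
    (h : s.card = t.card) : ∃ τ : Equiv.Perm α, s.image ⇑τ = t := by
  classical
  have h' : Fintype.card {x // x ∈ s} = Fintype.card {x // x ∈ t} := by
    rw [Fintype.card_coe, Fintype.card_coe, h]
  have hc : Fintype.card {x // ¬ x ∈ s} = Fintype.card {x // ¬ x ∈ t} := by
    rw [Fintype.card_subtype_compl, Fintype.card_subtype_compl, Fintype.card_coe,
      Fintype.card_coe, h]
  let e : {x // x ∈ s} ≃ {x // x ∈ t} := Fintype.equivOfCardEq h'
  let f : {x // ¬ x ∈ s} ≃ {x // ¬ x ∈ t} := Fintype.equivOfCardEq hc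
  refine ⟨Equiv.subtypeCongr e f, ?_⟩
  apply Finset.eq_of_subset_of_card_le
  · intro y hy
    simp only [Finset.mem_image] at hy
    obtain ⟨x, hx, rfl⟩ := hy
    have : Equiv.subtypeCongr e f x = (e ⟨x, hx⟩ : α) := by
      simp [Equiv.subtypeCongr, hx]
    rw [this]
    exact (e ⟨x, hx⟩).2
  · rw [Finset.card_image_of_injective _ (Equiv.injective _), h]

lemma perm_image_count {N κ : ℕ} (a g : Finset (Fin N)) (ha : a.card = κ) (hg : g.card = κ) :
    (Finset.univ.filter (fun π : Equiv.Perm (Fin N) => a.image ⇑π = g)).card * N.choose κ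
      = N.factorial := by
  classical
  have key : ∀ g' : Finset (Fin N), g'.card = κ →
      (Finset.univ.filter (fun π : Equiv.Perm (Fin N) => a.image ⇑π = g')).card =
      (Finset.univ.filter (fun π : Equiv.Perm (Fin N) => a.image ⇑π = g)).card := by
    intro g' hg'
    obtain ⟨τ, hτ⟩ := exists_perm_image (hg'.trans hg.symm)
    apply Finset.card_bij (fun π _ => π.trans τ)
    · intro π hπ
      simp only [Finset.mem_filter, Finset.mem_univ, true_and] at hπ ⊢
      rw [show ⇑(π.trans τ) = ⇑τ ∘ ⇑π from rfl, ← Finset.image_image, hπ, hτ]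
    · intro π1 _ π2 _ heq
      ext x
      have := congrArg (fun ρ : Equiv.Perm (Fin N) => ρ x) heq
      simp only [Equiv.trans_apply] at this
      exact congrArg Fin.val (τ.injective this)
    · intro ρ hρ
      simp only [Finset.mem_filter, Finset.mem_univ, true_and] at hρ
      refine ⟨ρ.trans τ.symm, ?_, by ext x; simp⟩
      simp only [Finset.mem_filter, Finset.mem_univ, true_and]
      rw [show ⇑(ρ.trans τ.symm) = ⇑τ.symm ∘ ⇑ρ from rfl, ← Finset.image_image, hρ, ← hτ,
        Finset.image_image]
      simp
  have part : (Finset.univ : Finset (Equiv.Perm (Fin N))).card =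
      ∑ g' ∈ Finset.univ.powersetCard κ,
        (Finset.univ.filter (fun π : Equiv.Perm (Fin N) => a.image ⇑π = g')).card := by
    apply Finset.card_eq_sum_card_fiberwise
    intro π _
    show a.image ⇑π ∈ Finset.univ.powersetCard κ
    rw [Finset.mem_powersetCard_univ, Finset.card_image_of_injective _ (Equiv.injective _), ha]
  have : (Finset.univ : Finset (Equiv.Perm (Fin N))).card =
      N.choose κ * (Finset.univ.filter (fun π : Equiv.Perm (Fin N) => a.image ⇑π = g)).card := by
    rw [part]
    rw [Finset.sum_congr rfl (fun g' hg' => key g' (Finset.mem_powersetCard_univ.mp hg'))]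
    rw [Finset.sum_const, Finset.card_powersetCard, Finset.card_univ, Fintype.card_fin,
      smul_eq_mul]
  have huniv : (Finset.univ : Finset (Equiv.Perm (Fin N))).card = N.factorial := by
    rw [Finset.card_univ, Fintype.card_perm, Fintype.card_fin]
  calc (Finset.univ.filter (fun π : Equiv.Perm (Fin N) => a.image ⇑π = g)).card * N.choose κ
      = N.choose κ * (Finset.univ.filter (fun π : Equiv.Perm (Fin N) => a.image ⇑π = g)).card :=
        mul_comm _ _
    _ = (Finset.univ : Finset (Equiv.Perm (Fin N))).card := this.symm
    _ = N.factorial := huniv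

private def Wf {q : ℕ} (n k : Fin q → ℕ) (hn : ∀ i, 0 < n i) (m : ℕ)
    (σ : ∀ i, Equiv.Perm (Fin (n i))) (t : Fin m) : ∀ i, Finset (Fin (n i)) :=
  fun i => (arc (hn i) ((t : ℕ) * n i / m) (k i)).image ⇑(σ i)

theorem stmt8 (p : ℕ) (n k : Fin (p + 1) → ℕ)
    (hn : ∀ i, 1 ≤ n i) (hk : ∀ i, 1 ≤ k i)
    (hmono : ∀ i j : Fin (p + 1), i ≤ j →
      (k i : ℚ) / (n i : ℚ) ≤ (k j : ℚ) / (n j : ℚ))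
    (hhalf : (k (Fin.last p) : ℚ) / (n (Fin.last p) : ℚ) ≤ 1 / 2)
    (F : Finset (∀ i, Finset (Fin (n i))))
    (huniform : ∀ f ∈ F, ∀ i, (f i).card = k i)
    (hint : ∀ f ∈ F, ∀ g ∈ F, ∃ i, (f i ∩ g i).Nonempty) :
    (F.card : ℚ) ≤ (k (Fin.last p) : ℚ) / (n (Fin.last p) : ℚ) *
      ∏ i, ((n i).choose (k i) : ℚ) := by
  classical
  have hn0 : ∀ i, 0 < n i := hn
  set m := n (Fin.last p) with hm_def
  set K := k (Fin.last p) with hK_def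
  have hmpos : 0 < m := hn _
  have hKpos : 0 < K := hk _
  have hnQ : ∀ i, (0:ℚ) < (n i : ℚ) := fun i => by exact_mod_cast hn0 i
  have h2K : 2 * K ≤ m := by
    rw [div_le_div_iff₀ (hnQ _) (by norm_num)] at hhalf
    have : (K : ℚ) * 2 ≤ (m : ℚ) := by linarith
    have := (by exact_mod_cast this : K * 2 ≤ m)
    omega
  have hkm : ∀ i, k i * m ≤ K * n i := by
    intro i
    have h := hmono i (Fin.last p) (Fin.le_last i)
    rw [div_le_div_iff₀ (hnQ i) (hnQ _)] at h
    exact_mod_cast h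
  have h2k : ∀ i, 2 * k i ≤ n i := by
    intro i
    have h := (hmono i (Fin.last p) (Fin.le_last i)).trans hhalf
    rw [div_le_div_iff₀ (hnQ i) (by norm_num)] at h
    have : (k i : ℚ) * 2 ≤ (n i : ℚ) := by linarith
    have := (by exact_mod_cast this : k i * 2 ≤ n i)
    omega
  have hkn : ∀ i, k i ≤ n i := fun i => by have := h2k i; have := hk i; omega
  -- per-permutation-tuple bound via the Katona circle lemma
  have hTle : ∀ σ : ∀ i, Equiv.Perm (Fin (n i)),
      (Finset.univ.filter (fun t : Fin m => Wf n k hn0 m σ t ∈ F)).card ≤ K := by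
    intro σ
    apply katona hKpos h2K
    intro t ht t' ht'
    simp only [Finset.mem_filter, Finset.mem_univ, true_and] at ht ht'
    by_contra hcon
    push_neg at hcon
    obtain ⟨hc1, hc2⟩ := hcon
    have hne : (t : ℕ) ≠ (t' : ℕ) := by
      intro h
      rw [show (t:ℕ) + m - (t':ℕ) = m by omega] at hc1
      simp [Nat.mod_self] at hc1
      omega
    -- symmetric reduction: big and small
    have key : ∀ tb ts : Fin m, Wf n k hn0 m σ tb ∈ F → Wf n k hn0 m σ ts ∈ F →
        (ts : ℕ) < (tb : ℕ) →
        K ≤ ((tb:ℕ) + m - (ts:ℕ)) % m → K ≤ ((ts:ℕ) + m - (tb:ℕ)) % m → False := by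
      intro tb ts hmb hms hlt hf1 hf2
      set d := (tb : ℕ) - (ts : ℕ) with hd_def
      have hdm : d < m := by have := tb.isLt; omega
      have he1 : ((tb:ℕ) + m - (ts:ℕ)) % m = d := by
        rw [show (tb:ℕ) + m - (ts:ℕ) = d + m by omega, Nat.add_mod_right,
          Nat.mod_eq_of_lt hdm]
      have he2 : ((ts:ℕ) + m - (tb:ℕ)) % m = m - d := by
        rw [show (ts:ℕ) + m - (tb:ℕ) = m - d by omega,
          Nat.mod_eq_of_lt (by omega)]
      rw [he1] at hf1
      rw [he2] at hf2
      obtain ⟨i, hi⟩ := hint _ hmb _ hms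
      simp only [Wf] at hi
      rw [← Finset.image_inter _ _ (σ i).injective] at hi
      rw [Finset.image_nonempty] at hi
      have hub : (tb:ℕ) * n i / m < n i :=
        Nat.div_lt_of_lt_mul (by
          exact (Nat.mul_lt_mul_right (hn0 i)).mpr tb.isLt)
      have hub' : (ts:ℕ) * n i / m < n i :=
        Nat.div_lt_of_lt_mul (by
          exact (Nat.mul_lt_mul_right (hn0 i)).mpr ts.isLt)
      have hclose := arc_inter_close (hn0 i) hub hub' (hkn i) hi
      have hdiag := diag_far hmpos (hk i) (hkm i)
        (t' := (ts:ℕ)) (d := d) hf1 (by omega)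
      rw [show (ts:ℕ) + d = (tb:ℕ) by omega] at hdiag
      set u := (tb:ℕ) * n i / m
      set u' := (ts:ℕ) * n i / m
      obtain ⟨hl, hr⟩ := hdiag
      have hmono' : u' ≤ u := Nat.div_le_div_right (Nat.mul_le_mul_right _ (by omega))
      have hv1 : (u + n i - u') % n i = u - u' := by
        rw [show u + n i - u' = (u - u') + n i by omega, Nat.add_mod_right,
          Nat.mod_eq_of_lt (by omega)]
      have hv2 : (u' + n i - u) % n i = n i - (u - u') := by
        rw [show u' + n i - u = n i - (u - u') by omega,
          Nat.mod_eq_of_lt (by have := hk i; omega)]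
      rcases hclose with h | h
      · rw [hv1] at h; omega
      · rw [hv2] at h; omega
    rcases Nat.lt_or_ge (t' : ℕ) (t : ℕ) with h | h
    · exact key t t' ht ht' h hc1 hc2
    · exact key t' t ht' ht (by omega) hc2 hc1
  -- counting step for a fixed t
  have hstep : ∀ t : Fin m,
      ((Finset.univ : Finset (∀ i, Equiv.Perm (Fin (n i)))).filter
          (fun σ => Wf n k hn0 m σ t ∈ F)).card * (∏ i, (n i).choose (k i)) =
        F.card * ∏ i, (n i).factorial := by
    intro t
    rw [Finset.card_eq_sum_card_fiberwise
      (f := fun σ => Wf n k hn0 m σ t) (t := F)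
      (s := (Finset.univ : Finset (∀ i, Equiv.Perm (Fin (n i)))).filter
        (fun σ => Wf n k hn0 m σ t ∈ F))
      (fun σ hσ => (Finset.mem_filter.mp hσ).2)]
    rw [Finset.sum_mul]
    rw [show F.card * ∏ i, (n i).factorial = ∑ _f ∈ F, ∏ i, (n i).factorial by
      rw [Finset.sum_const, smul_eq_mul]]
    apply Finset.sum_congr rfl
    intro f hf
    have hff : ((Finset.univ : Finset (∀ i, Equiv.Perm (Fin (n i)))).filter
          (fun σ => Wf n k hn0 m σ t ∈ F)).filter (fun σ => Wf n k hn0 m σ t = f) =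
        (Finset.univ : Finset (∀ i, Equiv.Perm (Fin (n i)))).filter
          (fun σ => Wf n k hn0 m σ t = f) := by
      ext σ
      simp only [Finset.mem_filter, Finset.mem_univ, true_and]
      constructor
      · exact fun h => h.2
      · exact fun h3 => ⟨h3.symm ▸ hf, h3⟩
    rw [hff]
    have hpi : (Finset.univ : Finset (∀ i, Equiv.Perm (Fin (n i)))).filter
          (fun σ => Wf n k hn0 m σ t = f) =
        Fintype.piFinset (fun i => Finset.univ.filter
          (fun π : Equiv.Perm (Fin (n i)) =>
            (arc (hn0 i) ((t:ℕ) * n i / m) (k i)).image ⇑π = f i)) := by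
      ext σ
      simp only [Finset.mem_filter, Finset.mem_univ, true_and, Fintype.mem_piFinset]
      rw [funext_iff]
      rfl
    rw [hpi, Fintype.card_piFinset, ← Finset.prod_mul_distrib]
    apply Finset.prod_congr rfl
    intro i _
    exact perm_image_count _ _ (arc_card (hn0 i) _ (hkn i)) (huniform f hf i)
  -- double counting
  have hcomm : ∑ σ : (∀ i, Equiv.Perm (Fin (n i))),
        (Finset.univ.filter (fun t : Fin m => Wf n k hn0 m σ t ∈ F)).card
      = ∑ t : Fin m, ((Finset.univ : Finset (∀ i, Equiv.Perm (Fin (n i)))).filter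
          (fun σ => Wf n k hn0 m σ t ∈ F)).card := by
    simp only [Finset.card_filter]
    rw [Finset.sum_comm]
  have hsum : (∑ σ : (∀ i, Equiv.Perm (Fin (n i))),
        (Finset.univ.filter (fun t : Fin m => Wf n k hn0 m σ t ∈ F)).card)
          * ∏ i, (n i).choose (k i)
      = m * (F.card * ∏ i, (n i).factorial) := by
    rw [hcomm, Finset.sum_mul]
    rw [Finset.sum_congr rfl (fun t _ => hstep t), Finset.sum_const, Finset.card_univ,
      Fintype.card_fin, smul_eq_mul]
  have hbound : (∑ σ : (∀ i, Equiv.Perm (Fin (n i))),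
        (Finset.univ.filter (fun t : Fin m => Wf n k hn0 m σ t ∈ F)).card)
      ≤ (∏ i, (n i).factorial) * K := by
    calc (∑ σ : (∀ i, Equiv.Perm (Fin (n i))),
        (Finset.univ.filter (fun t : Fin m => Wf n k hn0 m σ t ∈ F)).card)
        ≤ ∑ _σ : (∀ i, Equiv.Perm (Fin (n i))), K := Finset.sum_le_sum (fun σ _ => hTle σ)
      _ = (Fintype.card (∀ i, Equiv.Perm (Fin (n i)))) * K := by
          rw [Finset.sum_const, Finset.card_univ, smul_eq_mul]
      _ = (∏ i, (n i).factorial) * K := by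
          rw [Fintype.card_pi]
          congr 1
          exact Finset.prod_congr rfl (fun i _ => by rw [Fintype.card_perm, Fintype.card_fin])
  have main : m * F.card ≤ K * ∏ i, (n i).choose (k i) := by
    have hfac : 0 < ∏ i, (n i).factorial :=
      Finset.prod_pos (fun i _ => Nat.factorial_pos _)
    have h2 : (m * F.card) * (∏ i, (n i).factorial) ≤
        (K * ∏ i, (n i).choose (k i)) * (∏ i, (n i).factorial) := by
      calc (m * F.card) * (∏ i, (n i).factorial)
          = m * (F.card * ∏ i, (n i).factorial) := by ring
        _ = (∑ σ : (∀ i, Equiv.Perm (Fin (n i))),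
              (Finset.univ.filter (fun t : Fin m => Wf n k hn0 m σ t ∈ F)).card)
                * ∏ i, (n i).choose (k i) := hsum.symm
        _ ≤ ((∏ i, (n i).factorial) * K) * ∏ i, (n i).choose (k i) :=
            Nat.mul_le_mul_right _ hbound
        _ = (K * ∏ i, (n i).choose (k i)) * (∏ i, (n i).factorial) := by ring
    exact Nat.le_of_mul_le_mul_right h2 hfac
  have final : (F.card * m : ℕ) ≤ K * ∏ i, (n i).choose (k i) := by
    rw [mul_comm]; exact main
  rw [div_mul_eq_mul_div, le_div_iff₀ (by exact_mod_cast hmpos : (0:ℚ) < (m:ℚ))]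
  exact_mod_cast final
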